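/- Let θ*_A and θ*_D be unit vectors in ℝ² with θ*_A ≠ θ*_D, let 0 < α < 1/2, and let θ_C = θ_C(θ*_A, θ*_D) be the aggregate of the truthfully reported vectors. Then the ratio μ({t : sign(⟪θ_C, v(t)⟫) ≠ sign(⟪θ*_A, v(t)⟫)}) / μ({t : sign(⟪θ*_A, v(t)⟫) ≠ sign(⟪θ*_D, v(t)⟫)}) equals arccos(⟪θ_C, θ*_A⟫) / arccos(⟪θ*_D, θ*_A⟫), and the denominator probability is strictly positive. -/

import Mathlib

open Real MeasureTheory

/-- The unit direction vector `(cos t, sin t)` in the Euclidean plane. -/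
noncomputable def v (t : ℝ) : EuclideanSpace ℝ (Fin 2) :=
  (WithLp.equiv 2 (Fin 2 → ℝ)).symm ![Real.cos t, Real.sin t]

/-- The uniform probability measure on `[0, 2π]`. -/
noncomputable def μunif : Measure ℝ :=
  (ENNReal.ofReal (2 * Real.pi)⁻¹) • (volume.restrict (Set.Icc 0 (2 * Real.pi)))

/-- The aggregate vector `(α θ_D + (1−α) θ_A)/‖α θ_D + (1−α) θ_A‖`. -/
noncomputable def aggregate (α : ℝ) (θA θD : EuclideanSpace ℝ (Fin 2)) :
    EuclideanSpace ℝ (Fin 2) :=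
  (‖α • θD + (1 - α) • θA‖)⁻¹ • (α • θD + (1 - α) • θA)

open Set

lemma measurable_rsign : Measurable Real.sign := by
  have : Real.sign = fun r : ℝ => if r < 0 then (-1:ℝ) else if 0 < r then 1 else 0 := rfl
  rw [this]
  exact Measurable.ite measurableSet_Iio measurable_const
    (Measurable.ite measurableSet_Ioi measurable_const measurable_const)

lemma inner_v (u : EuclideanSpace ℝ (Fin 2)) (t : ℝ) :
    (inner ℝ u (v t) : ℝ) = u 0 * Real.cos t + u 1 * Real.sin t := by
  simp [PiLp.inner_apply, Fin.sum_univ_two, RCLike.inner_apply, v]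
  ring

lemma inner_vv (a b : ℝ) : (inner ℝ (v a) (v b) : ℝ) = Real.cos (b - a) := by
  rw [inner_v, Real.cos_sub]
  simp [v]
  ring

lemma exists_angle (u : EuclideanSpace ℝ (Fin 2)) (hu : ‖u‖ = 1) : ∃ φ : ℝ, u = v φ := by
  have hsum : (u 0)^2 + (u 1)^2 = 1 := by
    have h := congrArg (· ^ 2) hu
    rw [EuclideanSpace.norm_eq] at h
    simp only [Real.norm_eq_abs, one_pow] at h
    rw [Real.sq_sqrt (by positivity)] at h
    rw [Fin.sum_univ_two] at h
    simpa [sq_abs] using h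
  have hb0 : -1 ≤ u 0 := by nlinarith [sq_nonneg (u 1), sq_nonneg (u 0 + 1)]
  have hb1 : u 0 ≤ 1 := by nlinarith [sq_nonneg (u 1), sq_nonneg (u 0 - 1)]
  by_cases h : 0 ≤ u 1
  · refine ⟨Real.arccos (u 0), ?_⟩
    have hcos : Real.cos (Real.arccos (u 0)) = u 0 := Real.cos_arccos hb0 hb1
    have hsin : Real.sin (Real.arccos (u 0)) = u 1 := by
      rw [Real.sin_arccos, show 1 - (u 0)^2 = (u 1)^2 by linarith, Real.sqrt_sq_eq_abs,
        abs_of_nonneg h]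
    ext i
    fin_cases i
    · simpa [v] using hcos.symm
    · simpa [v] using hsin.symm
  · refine ⟨-Real.arccos (u 0), ?_⟩
    have hcos : Real.cos (-Real.arccos (u 0)) = u 0 := by
      rw [Real.cos_neg]; exact Real.cos_arccos hb0 hb1
    have hsin : Real.sin (-Real.arccos (u 0)) = u 1 := by
      rw [Real.sin_neg, Real.sin_arccos, show 1 - (u 0)^2 = (u 1)^2 by linarith,
        Real.sqrt_sq_eq_abs, abs_of_neg (lt_of_not_ge h), neg_neg]
    ext i
    fin_cases i
    · simpa [v] using hcos.symm
    · simpa [v] using hsin.symm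

lemma volume_S_Ioc (δ : ℝ) (hδ0 : 0 ≤ δ) (hδπ : δ ≤ π) :
    volume ({s | Real.sign (Real.cos s) ≠ Real.sign (Real.cos (s - δ))} ∩
      Ioc (-(π/2)) (3*π/2)) = ENNReal.ofReal (2*δ) := by
  have hπ := Real.pi_pos
  set S : Set ℝ := {s | Real.sign (Real.cos s) ≠ Real.sign (Real.cos (s - δ))} with hS
  set E : Set ℝ := Ioo (-(π/2)) (δ - π/2) ∪ Ioo (π/2) (δ + π/2) with hE
  set F : Set ℝ := ({δ - π/2, π/2, δ + π/2, 3*π/2} : Set ℝ) with hF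
  have hEsub : E ⊆ S ∩ Ioc (-(π/2)) (3*π/2) := by
    rintro t (⟨h1, h2⟩ | ⟨h1, h2⟩)
    · have hct : 0 < Real.cos t := Real.cos_pos_of_mem_Ioo ⟨h1, by linarith⟩
      have hct' : Real.cos (t - δ) < 0 := by
        rw [← Real.cos_neg, neg_sub]
        exact Real.cos_neg_of_pi_div_two_lt_of_lt (by linarith) (by linarith)
      constructor
      · simp only [hS, Set.mem_setOf_eq, Real.sign_of_pos hct, Real.sign_of_neg hct']
        norm_num
      · constructor <;> linarith
    · have hct : Real.cos t < 0 :=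
        Real.cos_neg_of_pi_div_two_lt_of_lt (by linarith) (by linarith)
      have hct' : 0 < Real.cos (t - δ) := Real.cos_pos_of_mem_Ioo ⟨by linarith, by linarith⟩
      constructor
      · simp only [hS, Set.mem_setOf_eq, Real.sign_of_neg hct, Real.sign_of_pos hct']
        norm_num
      · constructor <;> linarith
  have hSsub : S ∩ Ioc (-(π/2)) (3*π/2) ⊆ E ∪ F := by
    rintro t ⟨htS, ht1, ht2⟩
    by_contra h
    simp only [hE, hF, Set.mem_union, Set.mem_Ioo, Set.mem_insert_iff,
      Set.mem_singleton_iff, not_or, not_and] at h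
    obtain ⟨⟨hE1, hE2⟩, h1, h2, h3, h4⟩ := h
    apply htS
    rcases lt_trichotomy t (δ - π/2) with hc | hc | hc
    · exact absurd hc (hE1 ht1)
    · exact absurd hc h1
    · rcases lt_trichotomy t (π/2) with hd | hd | hd
      · have hct : 0 < Real.cos t := Real.cos_pos_of_mem_Ioo ⟨by linarith, hd⟩
        have hct' : 0 < Real.cos (t - δ) := Real.cos_pos_of_mem_Ioo ⟨by linarith, by linarith⟩
        simp [Real.sign_of_pos hct, Real.sign_of_pos hct']
      · exact absurd hd h2
      · rcases lt_trichotomy t (δ + π/2) with he | he | he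
        · exact absurd he (hE2 hd)
        · exact absurd he h3
        · have ht2' : t < 3*π/2 := lt_of_le_of_ne ht2 h4
          have hct : Real.cos t < 0 :=
            Real.cos_neg_of_pi_div_two_lt_of_lt (by linarith) (by linarith)
          have hct' : Real.cos (t - δ) < 0 :=
            Real.cos_neg_of_pi_div_two_lt_of_lt (by linarith) (by linarith)
          simp [Real.sign_of_neg hct, Real.sign_of_neg hct']
  have hFvol : volume F = 0 := by
    rw [hF]
    exact Set.Finite.measure_zero (Set.toFinite _) volume
  have hEvol : volume E = ENNReal.ofReal (2*δ) := by
    rw [hE, measure_union _ measurableSet_Ioo]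
    · rw [Real.volume_Ioo, Real.volume_Ioo]
      rw [← ENNReal.ofReal_add (by linarith) (by linarith)]
      ring_nf
    · exact Set.disjoint_left.mpr fun x ⟨_, hx2⟩ ⟨hx3, _⟩ => by linarith
  refine le_antisymm ?_ ?_
  · calc volume (S ∩ Ioc (-(π/2)) (3*π/2)) ≤ volume (E ∪ F) := measure_mono hSsub
      _ ≤ volume E + volume F := measure_union_le _ _
      _ = ENNReal.ofReal (2*δ) := by rw [hEvol, hFvol, add_zero]
  · rw [← hEvol]; exact measure_mono hEsub

lemma meas_key (φ δ : ℝ) (hδ0 : 0 ≤ δ) (hδπ : δ ≤ π) :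
    volume {t ∈ Icc (0:ℝ) (2*π) |
        Real.sign (Real.cos (t - φ)) ≠ Real.sign (Real.cos (t - (φ + δ)))} =
      ENNReal.ofReal (2*δ) := by
  have hvol := volume_S_Ioc δ hδ0 hδπ
  have hπ := Real.pi_pos
  set S : Set ℝ := {s | Real.sign (Real.cos s) ≠ Real.sign (Real.cos (s - δ))} with hS
  have hSm : MeasurableSet S :=
    (measurableSet_eq_fun (measurable_rsign.comp Real.measurable_cos)
      (measurable_rsign.comp (Real.measurable_cos.comp
        (measurable_id.sub measurable_const)))).compl
  have hper : ∀ (n : ℤ) (x : ℝ), (x + n • (2*π)) ∈ S ↔ x ∈ S := by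
    intro n x
    have h1 : Real.cos (x + n • (2*π)) = Real.cos x := by
      simpa using Real.cos_add_int_mul_two_pi x n
    have h2 : Real.cos (x + n • (2*π) - δ) = Real.cos (x - δ) := by
      have e : x + n • (2*π) - δ = (x - δ) + n * (2*π) := by
        push_cast [zsmul_eq_mul]; ring
      rw [e, Real.cos_add_int_mul_two_pi]
    simp only [hS, Set.mem_setOf_eq, h1, h2]
  have hset : {t ∈ Icc (0:ℝ) (2*π) |
      Real.sign (Real.cos (t - φ)) ≠ Real.sign (Real.cos (t - (φ + δ)))} =
      (fun t => t + (-φ)) ⁻¹' (S ∩ Icc (-φ) (-φ + 2*π)) := by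
    have key : ∀ t : ℝ, (t + -φ ∈ S) ↔
        Real.sign (Real.cos (t - φ)) ≠ Real.sign (Real.cos (t - (φ + δ))) := by
      intro t
      rw [hS]
      simp only [Set.mem_setOf_eq]
      rw [show t + -φ - δ = t - (φ + δ) by ring, show t + -φ = t - φ by ring]
    ext t
    simp only [Set.mem_setOf_eq, Set.mem_preimage, Set.mem_inter_iff, Set.mem_Icc, key]
    constructor
    · rintro ⟨⟨h1, h2⟩, h3⟩
      exact ⟨h3, by linarith, by linarith⟩
    · rintro ⟨h3, h1, h2⟩
      exact ⟨⟨by linarith, by linarith⟩, h3⟩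
  rw [hset, measure_preimage_add_right]
  have hIccIoc : ∀ a b : ℝ, volume (S ∩ Icc a b) = volume (S ∩ Ioc a b) := by
    intro a b
    refine le_antisymm ?_ (measure_mono (Set.inter_subset_inter_right _ Ioc_subset_Icc_self))
    calc volume (S ∩ Icc a b) ≤ volume ((S ∩ Ioc a b) ∪ {a}) := by
          refine measure_mono ?_
          rintro t ⟨htS, ht1, ht2⟩
          rcases eq_or_lt_of_le ht1 with h | h
          · exact Or.inr (by simp [← h])
          · exact Or.inl ⟨htS, h, ht2⟩
      _ ≤ volume (S ∩ Ioc a b) + volume ({a} : Set ℝ) := measure_union_le _ _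
      _ = volume (S ∩ Ioc a b) := by simp
  rw [hIccIoc]
  have hfd1 := isAddFundamentalDomain_Ioc (T := 2*π) (by linarith) (-φ)
  have hfd2 := isAddFundamentalDomain_Ioc (T := 2*π) (by linarith) (-(π/2))
  have hinv : ∀ g : AddSubgroup.zmultiples (2*π), (fun x : ℝ => g +ᵥ x) ⁻¹' S = S := by
    intro g
    obtain ⟨n, hn⟩ := g.property
    ext x
    simp only [Set.mem_preimage]
    have hval : g +ᵥ x = x + n • (2*π) := by
      have : g +ᵥ x = (g : ℝ) + x := rfl
      rw [this, ← hn, add_comm]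
    rw [hval]
    exact hper n x
  rw [hfd1.measure_set_eq hfd2 hSm hinv, show -(π/2) + 2*π = 3*π/2 by ring, hvol]

lemma meas_vec (u w : EuclideanSpace ℝ (Fin 2)) (hu : ‖u‖ = 1) (hw : ‖w‖ = 1) :
    volume {t ∈ Icc (0:ℝ) (2*π) |
        Real.sign (inner ℝ u (v t) : ℝ) ≠ Real.sign (inner ℝ w (v t) : ℝ)} =
      ENNReal.ofReal (2 * Real.arccos (inner ℝ u w : ℝ)) := by
  obtain ⟨φ, rfl⟩ := exists_angle u hu
  obtain ⟨ψ, rfl⟩ := exists_angle w hw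
  set θ := Real.arccos (inner ℝ (v φ) (v ψ) : ℝ) with hθ
  have hip : (inner ℝ (v φ) (v ψ) : ℝ) = Real.cos (ψ - φ) := inner_vv φ ψ
  have hθ0 : 0 ≤ θ := Real.arccos_nonneg _
  have hθπ : θ ≤ π := Real.arccos_le_pi _
  have hcosθ : Real.cos θ = Real.cos (ψ - φ) := by
    rw [hθ, hip, Real.cos_arccos (Real.neg_one_le_cos _) (Real.cos_le_one _)]
  have hsinθ : 0 ≤ Real.sin θ := Real.sin_nonneg_of_nonneg_of_le_pi hθ0 hθπ
  have hsq : Real.sin (ψ - φ) ^ 2 = Real.sin θ ^ 2 := by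
    rw [Real.sin_sq, Real.sin_sq, hcosθ]
  have hsin : Real.sin (ψ - φ) = Real.sin θ ∨ Real.sin (ψ - φ) = -Real.sin θ :=
    sq_eq_sq_iff_eq_or_eq_neg.mp hsq
  -- rewrite inner products as cosines in the set
  have hrw : ∀ a : ℝ, {t ∈ Icc (0:ℝ) (2*π) |
      Real.sign (inner ℝ (v a) (v t) : ℝ) ≠ Real.sign (inner ℝ (v ψ) (v t) : ℝ)} =
      {t ∈ Icc (0:ℝ) (2*π) |
      Real.sign (Real.cos (t - a)) ≠ Real.sign (Real.cos (t - ψ))} := by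
    intro a; ext t; simp only [Set.mem_setOf_eq, inner_vv]
  rw [hrw]
  rcases hsin with hsin | hsin
  · have hc : ∀ t : ℝ, Real.cos (t - ψ) = Real.cos (t - (φ + θ)) := by
      intro t
      rw [show t - ψ = (t - φ) - (ψ - φ) by ring, Real.cos_sub, ← hcosθ, hsin,
        ← Real.cos_sub, show (t - φ) - θ = t - (φ + θ) by ring]
    have : {t ∈ Icc (0:ℝ) (2*π) |
        Real.sign (Real.cos (t - φ)) ≠ Real.sign (Real.cos (t - ψ))} =
        {t ∈ Icc (0:ℝ) (2*π) |
        Real.sign (Real.cos (t - φ)) ≠ Real.sign (Real.cos (t - (φ + θ)))} := by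
      ext t; simp only [Set.mem_setOf_eq, hc]
    rw [this, meas_key φ θ hθ0 hθπ]
  · have hc : ∀ t : ℝ, Real.cos (t - ψ) = Real.cos (t - (φ - θ)) := by
      intro t
      rw [show t - ψ = (t - φ) - (ψ - φ) by ring, Real.cos_sub, ← hcosθ, hsin,
        show t - (φ - θ) = (t - φ) + θ by ring, Real.cos_add]
      ring
    have : {t ∈ Icc (0:ℝ) (2*π) |
        Real.sign (Real.cos (t - φ)) ≠ Real.sign (Real.cos (t - ψ))} =
        {t ∈ Icc (0:ℝ) (2*π) |
        Real.sign (Real.cos (t - (φ - θ))) ≠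
          Real.sign (Real.cos (t - ((φ - θ) + θ)))} := by
      ext t
      rw [show (φ - θ) + θ = φ by ring]
      simp only [Set.mem_setOf_eq, hc]
      exact and_congr_right fun _ => ne_comm
    rw [this, meas_key (φ - θ) θ hθ0 hθπ]
/-- Appendix B identity: among disputed cases, the fraction where the minority prevails
equals `arccos(θ_C · θ*_A)/arccos(θ*_D · θ*_A)`, and the probability of dispute is positive. -/
theorem stmt_1 (α : ℝ) (hα : 0 < α) (hα' : α < 1 / 2)
    (θAstar θDstar : EuclideanSpace ℝ (Fin 2))
    (hA : ‖θAstar‖ = 1) (hD : ‖θDstar‖ = 1) (hne : θAstar ≠ θDstar) :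
    0 < μunif {t ∈ Set.Icc (0 : ℝ) (2 * Real.pi) |
        Real.sign (inner ℝ θAstar (v t) : ℝ) ≠ Real.sign (inner ℝ θDstar (v t) : ℝ)} ∧
    μunif {t ∈ Set.Icc (0 : ℝ) (2 * Real.pi) |
        Real.sign (inner ℝ (aggregate α θAstar θDstar) (v t) : ℝ) ≠
          Real.sign (inner ℝ θAstar (v t) : ℝ)} /
      μunif {t ∈ Set.Icc (0 : ℝ) (2 * Real.pi) |
        Real.sign (inner ℝ θAstar (v t) : ℝ) ≠ Real.sign (inner ℝ θDstar (v t) : ℝ)} =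
      ENNReal.ofReal
        (Real.arccos (inner ℝ (aggregate α θAstar θDstar) θAstar : ℝ) /
          Real.arccos (inner ℝ θDstar θAstar : ℝ)) := by
  have hπ := Real.pi_pos
  -- aggregate is a unit vector
  have h1 : ‖(1 - α) • θAstar‖ = 1 - α := by
    rw [norm_smul, hA, Real.norm_eq_abs, abs_of_pos (by linarith), mul_one]
  have h2 : ‖α • θDstar‖ = α := by
    rw [norm_smul, hD, Real.norm_eq_abs, abs_of_pos hα, mul_one]
  have h3 : (1 - α) • θAstar - (-(α • θDstar)) = α • θDstar + (1 - α) • θAstar := by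
    abel
  have h4 := norm_sub_norm_le ((1 - α) • θAstar) (-(α • θDstar))
  rw [h3, norm_neg, h1, h2] at h4
  have hpos : 0 < ‖α • θDstar + (1 - α) • θAstar‖ := by linarith
  have hagg : ‖aggregate α θAstar θDstar‖ = 1 := by
    rw [aggregate, norm_smul, norm_inv, norm_norm, inv_mul_cancel₀ hpos.ne']
  -- the two measures
  have happ : ∀ A : Set ℝ, A ⊆ Set.Icc (0:ℝ) (2 * Real.pi) →
      μunif A = ENNReal.ofReal (2 * Real.pi)⁻¹ * volume A := by
    intro A hsub
    rw [μunif, Measure.smul_apply, Measure.restrict_apply' measurableSet_Icc,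
      Set.inter_eq_self_of_subset_left hsub, smul_eq_mul]
  set a := Real.arccos (inner ℝ (aggregate α θAstar θDstar) θAstar : ℝ) with ha
  set b := Real.arccos (inner ℝ θDstar θAstar : ℝ) with hb
  have hNval : μunif {t ∈ Set.Icc (0 : ℝ) (2 * Real.pi) |
      Real.sign (inner ℝ (aggregate α θAstar θDstar) (v t) : ℝ) ≠
        Real.sign (inner ℝ θAstar (v t) : ℝ)} =
      ENNReal.ofReal (2 * Real.pi)⁻¹ * ENNReal.ofReal (2 * a) := by
    rw [happ _ (Set.sep_subset _ _), meas_vec _ _ hagg hA]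
  have hDval : μunif {t ∈ Set.Icc (0 : ℝ) (2 * Real.pi) |
      Real.sign (inner ℝ θAstar (v t) : ℝ) ≠ Real.sign (inner ℝ θDstar (v t) : ℝ)} =
      ENNReal.ofReal (2 * Real.pi)⁻¹ * ENNReal.ofReal (2 * b) := by
    rw [happ _ (Set.sep_subset _ _), meas_vec _ _ hA hD, real_inner_comm]
  -- positivity
  have hblt : (inner ℝ θDstar θAstar : ℝ) < 1 := by
    refine lt_of_le_of_ne ?_ ?_
    · calc (inner ℝ θDstar θAstar : ℝ) ≤ ‖θDstar‖ * ‖θAstar‖ := real_inner_le_norm _ _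
        _ = 1 := by rw [hA, hD, mul_one]
    · intro h
      exact hne ((inner_eq_one_iff_of_norm_eq_one hD hA).mp h).symm
  have hbpos : 0 < b := Real.arccos_pos.mpr hblt
  have hc0 : (ENNReal.ofReal (2 * Real.pi)⁻¹) ≠ 0 :=
    (ENNReal.ofReal_pos.mpr (by positivity)).ne'
  have hb0 : (ENNReal.ofReal (2 * b)) ≠ 0 :=
    (ENNReal.ofReal_pos.mpr (by linarith)).ne'
  constructor
  · rw [hDval]
    exact pos_iff_ne_zero.mpr (mul_ne_zero hc0 hb0)
  · rw [hNval, hDval, ENNReal.mul_div_mul_left _ _ hc0 ENNReal.ofReal_ne_top,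
      ← ENNReal.ofReal_div_of_pos (by linarith), mul_div_mul_left _ _ (two_ne_zero)]
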